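/- Let p be a prime, and let F(z) ∈ ℤ[[z]] be a power series satisfying F(z) ≡ z^μ_p · F(z)^μ_p · (z^{p−1} F(z)^{p−1} − 1)^M (mod p) coefficientwise, where μ_p ≥ 1 and M ≥ 0 are integers. Then F(z) ≡ 0 (mod p), i.e., every coefficient of F is divisible by p. -/

import Mathlib

theorem stmt_15 (p : ℕ) (hp : p.Prime) (μ M : ℕ) (hμ : 1 ≤ μ)
    (F : PowerSeries ℤ)
    (hF : ∀ n : ℕ, (p : ℤ) ∣ PowerSeries.coeff n
        (F - PowerSeries.X ^ μ * F ^ μ *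
          (PowerSeries.X ^ (p - 1) * F ^ (p - 1) - 1) ^ M)) :
    ∀ n : ℕ, (p : ℤ) ∣ PowerSeries.coeff n F := by
  haveI : Fact p.Prime := ⟨hp⟩
  set φ := PowerSeries.map (Int.castRingHom (ZMod p)) with hφ
  set f : PowerSeries (ZMod p) := φ F with hfdef
  have h0 : φ (F - PowerSeries.X ^ μ * F ^ μ *
      (PowerSeries.X ^ (p - 1) * F ^ (p - 1) - 1) ^ M) = 0 := by
    ext n
    rw [PowerSeries.coeff_map, map_zero]
    exact (ZMod.intCast_zmod_eq_zero_iff_dvd _ p).2 (hF n)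
  have hf : f = PowerSeries.X ^ μ * f ^ μ *
      (PowerSeries.X ^ (p - 1) * f ^ (p - 1) - 1) ^ M := by
    have := sub_eq_zero.mp (by simpa [hφ, map_sub, map_mul, map_pow, map_one] using h0)
    simpa [hφ, map_mul, map_pow, map_sub, map_one, PowerSeries.map_X] using this
  -- rewrite as f = f * h with X ∣ h
  set g : PowerSeries (ZMod p) :=
    PowerSeries.X ^ (p - 1) * f ^ (p - 1) - 1 with hg
  set h : PowerSeries (ZMod p) := PowerSeries.X ^ μ * f ^ (μ - 1) * g ^ M with hh
  have hfh : f = f * h := by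
    rw [hh]
    have : f ^ μ = f * f ^ (μ - 1) := by
      rw [← pow_succ']; congr 1; omega
    calc f = PowerSeries.X ^ μ * f ^ μ * g ^ M := hf
      _ = f * (PowerSeries.X ^ μ * f ^ (μ - 1) * g ^ M) := by rw [this]; ring
  have hhc : PowerSeries.constantCoeff h = 0 := by
    have : PowerSeries.constantCoeff (PowerSeries.X ^ μ : PowerSeries (ZMod p)) = 0 := by
      rw [map_pow, PowerSeries.constantCoeff_X, zero_pow (by omega)]
    rw [hh, map_mul, map_mul, this, zero_mul, zero_mul]
  have hunit : IsUnit (1 - h) := by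
    apply PowerSeries.isUnit_iff_constantCoeff.mpr
    rw [map_sub, map_one, hhc, sub_zero]
    exact isUnit_one
  have hf0 : f = 0 := by
    have : f * (1 - h) = 0 := by rw [mul_sub, mul_one, ← hfh, sub_self]
    obtain ⟨u, hu⟩ := hunit
    have := congrArg (· * (↑u⁻¹ : PowerSeries (ZMod p))) this
    simpa [mul_assoc, ← hu, zero_mul] using this
  intro n
  have : (PowerSeries.coeff n) f = 0 := by rw [hf0, map_zero]
  rw [hfdef, hφ, PowerSeries.coeff_map] at this
  exact (ZMod.intCast_zmod_eq_zero_iff_dvd _ p).1 this
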